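/- Let c ∈ ℝ, m, n ∈ ℕ with N = m + n, and suppose λ ∈ ℂ \ {±2±c} is related to z, w ∈ ℂ\{0} by λ - c = z + 1/z and λ + c = w + 1/w. Then λ is an eigenvalue of the pencil H_{N;c} - λD_{m,n} if and only if β_{m,n}(z,w) = 0, where β_{m,n}(z,w) = (z^{m+1} - z^{-m-1})(w^{n+1} - w^{-n-1}) + (z^m - z^{-m})(w^n - w^{-n}). -/

import Mathlib

open Matrix

noncomputable def Hmat (N : ℕ) (c : ℂ) : Matrix (Fin N) (Fin N) ℂ :=
  fun i j => if (i : ℕ) = (j : ℕ) then c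
    else if (i : ℕ) + 1 = (j : ℕ) ∨ (j : ℕ) + 1 = (i : ℕ) then 1 else 0

noncomputable def Dmat (m n : ℕ) : Matrix (Fin (m + n)) (Fin (m + n)) ℂ :=
  Matrix.diagonal (fun i => if (i : ℕ) < m then 1 else -1)

noncomputable def betaF (m n : ℕ) (z w : ℂ) : ℂ :=
  (z ^ (m + 1) - z ^ (-(m + 1) : ℤ)) * (w ^ (n + 1) - w ^ (-(n + 1) : ℤ)) +
    (z ^ m - z ^ (-(m : ℤ))) * (w ^ n - w ^ (-(n : ℤ)))

section Aux
set_option linter.unreachableTactic false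
set_option linter.unusedTactic false
set_option linter.unnecessarySimpa false


noncomputable def Tmat (d : ℕ → ℂ) (N : ℕ) : Matrix (Fin N) (Fin N) ℂ :=
  fun i j => if (i : ℕ) = (j : ℕ) then d i
    else if (i : ℕ) + 1 = (j : ℕ) ∨ (j : ℕ) + 1 = (i : ℕ) then 1 else 0

lemma Tmat_submatrix {N M : ℕ} (d : ℕ → ℂ) (f g : Fin M → Fin N)
    (hf : ∀ i, ((f i : ℕ)) = i) (hg : ∀ i, ((g i : ℕ)) = i) :
    (Tmat d N).submatrix f g = Tmat d M := by
  funext i j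
  simp [Tmat, Matrix.submatrix_apply, hf, hg]

lemma coe_succAbove {k : ℕ} (p : Fin (k+1)) (i : Fin k) :
    ((p.succAbove i : ℕ)) = if (i:ℕ) < (p:ℕ) then (i:ℕ) else (i:ℕ)+1 := by
  rcases lt_or_ge ((i:ℕ)) ((p:ℕ)) with h | h
  · rw [Fin.succAbove_of_castSucc_lt _ _ (by rwa [Fin.lt_def])]
    simp [h]
  · rw [Fin.succAbove_of_le_castSucc _ _ (by rwa [Fin.le_def])]
    simp [Nat.not_lt.2 h]

lemma det_Tmat_rec (d : ℕ → ℂ) (N : ℕ) :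
    (Tmat d (N + 2)).det = d (N + 1) * (Tmat d (N + 1)).det - (Tmat d N).det := by
  rw [det_succ_row (Tmat d (N + 2)) (Fin.last (N + 1))]
  rw [Fin.sum_univ_castSucc, Fin.sum_univ_castSucc]
  have hz : ∀ j : Fin N, (-1 : ℂ) ^ ((Fin.last (N+1) : ℕ) + ((j.castSucc.castSucc : Fin (N+2)) : ℕ))
      * Tmat d (N+2) (Fin.last (N+1)) j.castSucc.castSucc *
      ((Tmat d (N+2)).submatrix (Fin.last (N+1)).succAbove (j.castSucc.castSucc).succAbove).det = 0 := by
    intro j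
    have : Tmat d (N+2) (Fin.last (N+1)) j.castSucc.castSucc = 0 := by
      have hj : (j : ℕ) < N := j.isLt
      simp only [Tmat, Fin.coe_castSucc, Fin.val_last]
      split_ifs with h1 h2 <;> first | rfl | (exfalso; omega) | (exfalso; simp_all) | (exfalso; simp_all; omega)
    rw [this]; ring
  rw [Finset.sum_eq_zero (fun j _ => hz j), zero_add]
  -- the minor for column index N
  have hB : ((Tmat d (N+2)).submatrix (Fin.last (N+1)).succAbove
      ((Fin.last N).castSucc : Fin (N+2)).succAbove).det = (Tmat d N).det := by
    rw [det_succ_column _ (Fin.last N), Fin.sum_univ_castSucc]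
    have hz2 : ∀ i : Fin N, (-1:ℂ) ^ (((i.castSucc : Fin (N+1)) : ℕ) + ((Fin.last N : ℕ)))
        * ((Tmat d (N+2)).submatrix (Fin.last (N+1)).succAbove
            ((Fin.last N).castSucc : Fin (N+2)).succAbove) i.castSucc (Fin.last N)
        * (((Tmat d (N+2)).submatrix (Fin.last (N+1)).succAbove
            ((Fin.last N).castSucc : Fin (N+2)).succAbove).submatrix
              (i.castSucc).succAbove (Fin.last N).succAbove).det = 0 := by
      intro i
      have : ((Tmat d (N+2)).submatrix (Fin.last (N+1)).succAbove
          ((Fin.last N).castSucc : Fin (N+2)).succAbove) i.castSucc (Fin.last N) = 0 := by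
        have hi : (i : ℕ) < N := i.isLt
        have hr : (((Fin.last (N+1)).succAbove i.castSucc : Fin (N+2)) : ℕ) = (i : ℕ) := by
          simp [coe_succAbove, hi]
        have hc : ((((Fin.last N).castSucc : Fin (N+2)).succAbove (Fin.last N) : Fin (N+2)) : ℕ)
            = N + 1 := by
          simp [coe_succAbove]
        simp only [Matrix.submatrix_apply, Tmat]
        split_ifs with h1 h2 <;> first | rfl | (exfalso; omega) | (exfalso; simp_all) | (exfalso; simp_all; omega)
      rw [this]; ring
    rw [Finset.sum_eq_zero (fun i _ => hz2 i), zero_add]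
    have hent : ((Tmat d (N+2)).submatrix (Fin.last (N+1)).succAbove
        ((Fin.last N).castSucc : Fin (N+2)).succAbove) (Fin.last N) (Fin.last N) = 1 := by
      have hr : (((Fin.last (N+1)).succAbove (Fin.last N) : Fin (N+2)) : ℕ) = N := by
        simp [coe_succAbove]
      have hc : ((((Fin.last N).castSucc : Fin (N+2)).succAbove (Fin.last N) : Fin (N+2)) : ℕ)
          = N + 1 := by
        simp [coe_succAbove]
      simp only [Matrix.submatrix_apply, Tmat]
      split_ifs with h1 h2 <;> first | rfl | (exfalso; omega) | (exfalso; simp_all) | (exfalso; simp_all; omega)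
    rw [hent]
    have hmin : (((Tmat d (N+2)).submatrix (Fin.last (N+1)).succAbove
        ((Fin.last N).castSucc : Fin (N+2)).succAbove).submatrix
          (Fin.last N).succAbove (Fin.last N).succAbove) = Tmat d N := by
      rw [Matrix.submatrix_submatrix]
      apply Tmat_submatrix
      · intro i
        simp only [Function.comp_apply]
        have h1 : (((Fin.last N).succAbove i : Fin (N+1)) : ℕ) = (i : ℕ) := by
          rw [coe_succAbove, if_pos (by simpa using i.isLt)]
        rw [coe_succAbove, h1, if_pos (by simp)]
      · intro i
        simp only [Function.comp_apply]
        have h1 : (((Fin.last N).succAbove i : Fin (N+1)) : ℕ) = (i : ℕ) := by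
          rw [coe_succAbove, if_pos (by simpa using i.isLt)]
        rw [coe_succAbove, h1, if_pos (by simp [i.isLt])]
    rw [hmin]
    have he : (((Fin.last N : Fin (N+1)) : ℕ) + ((Fin.last N : ℕ))) = 2*N := by
      simp [Fin.val_last]; ring
    rw [he]
    have : ((-1:ℂ)) ^ (2*N) = 1 := Even.neg_one_pow ⟨N, by ring⟩
    rw [this]; ring
  have hent1 : Tmat d (N+2) (Fin.last (N+1)) ((Fin.last N).castSucc : Fin (N+2)) = 1 := by
    simp only [Tmat, Fin.val_last, Fin.coe_castSucc]
    split_ifs with h1 h2 <;> first | rfl | (exfalso; omega) | (exfalso; simp_all) | (exfalso; simp_all; omega)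
  have hent2 : Tmat d (N+2) (Fin.last (N+1)) (Fin.last (N+1)) = d (N+1) := by
    simp [Tmat]
  have hmin2 : (Tmat d (N+2)).submatrix (Fin.last (N+1)).succAbove
      (Fin.last (N+1)).succAbove = Tmat d (N+1) := by
    apply Tmat_submatrix <;>
      (intro i; rw [coe_succAbove, if_pos (by simp [Fin.val_last, i.isLt]; try omega)])
  rw [hent1, hent2, hmin2, hB]
  have hsign1 : ((-1:ℂ)) ^ ((Fin.last (N+1) : ℕ) + (((Fin.last N).castSucc : Fin (N+2)) : ℕ)) = -1 := by
    have : ((Fin.last (N+1) : ℕ) + (((Fin.last N).castSucc : Fin (N+2)) : ℕ)) = 2*N+1 := by simp; omega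
    rw [this]; exact Odd.neg_one_pow ⟨N, by ring⟩
  have hsign2 : ((-1:ℂ)) ^ ((Fin.last (N+1) : ℕ) + ((Fin.last (N+1) : Fin (N+2)) : ℕ)) = 1 := by
    have : ((Fin.last (N+1) : ℕ) + ((Fin.last (N+1) : Fin (N+2)) : ℕ)) = 2*(N+1) := by simp; omega
    rw [this]; exact Even.neg_one_pow ⟨N+1, by ring⟩
  rw [hsign1, hsign2]
  ring

noncomputable def pDet (d : ℕ → ℂ) : ℕ → ℂ
  | 0 => 1
  | 1 => d 0
  | (k+2) => d (k+1) * pDet d (k+1) - pDet d k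

noncomputable def Fz (z : ℂ) (k : ℕ) : ℂ := z ^ k - z ^ (-(k : ℤ))

lemma Fz_zero (z : ℂ) : Fz z 0 = 0 := by simp [Fz]

lemma Fz_rec (z : ℂ) (hz : z ≠ 0) (k : ℕ) :
    Fz z (k + 2) = (z + 1/z) * Fz z (k + 1) - Fz z k := by
  simp only [Fz, _root_.zpow_neg, zpow_natCast]
  field_simp
  ring

-- pDet for pure initial segment: d i = a for i < m
lemma pDet_A (z : ℂ) (hz : z ≠ 0) (d : ℕ → ℂ) (m : ℕ)
    (hd : ∀ i, i < m → d i = -(z + 1/z)) :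
    ∀ k, k ≤ m → pDet d k * Fz z 1 = (-1) ^ k * Fz z (k + 1) := by
  intro k
  induction k using Nat.twoStepInduction with
  | zero => intro _; simp [pDet]
  | one =>
    intro h1
    have : d 0 = -(z + 1/z) := hd 0 h1
    rw [pDet, this]
    have h2 : Fz z 2 = (z + 1/z) * Fz z 1 - Fz z 0 := Fz_rec z hz 0
    rw [Fz_zero] at h2
    rw [pow_one]
    linear_combination h2
  | more k ih ih1 =>
    intro hk2
    have ihk := ih (by omega)
    have ihk1 := ih1 (by omega)
    have hdk : d (k+1) = -(z + 1/z) := hd (k+1) (by omega)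
    rw [show k+2 = (k+1)+1 from rfl, pDet, hdk]
    have hrec : Fz z (k + 3) = (z + 1/z) * Fz z (k + 2) - Fz z (k + 1) := Fz_rec z hz (k+1)
    have hs : ((-1:ℂ)) ^ (k+2) = (-1)^k := by ring
    have hs1 : ((-1:ℂ)) ^ (k+1) = -(-1)^k := by ring
    rw [show k+1+1 = k+2 from rfl, show k+2+1 = k+3 from rfl, hs]
    linear_combination (-(z + 1/z)) * ihk1 - ihk - ((-1:ℂ))^k * hrec

lemma det_Tmat (d : ℕ → ℂ) : ∀ N, (Tmat d N).det = pDet d N := by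
  intro N
  induction N using Nat.twoStepInduction with
  | zero => simp [pDet]
  | one => simp [pDet, Tmat, Matrix.det_fin_one]
  | more k ih ih1 => rw [det_Tmat_rec, ih, ih1, pDet]

lemma pDet_B (z w : ℂ) (hz : z ≠ 0) (hw : w ≠ 0) (m : ℕ) (d : ℕ → ℂ)
    (hd : ∀ i, d i = if i < m then -(z + 1/z) else (w + 1/w)) :
    ∀ k, pDet d (m + k) * Fz z 1 * Fz w 1 =
      (-1) ^ m * (Fz z (m+1) * Fz w (k+1) + Fz z m * Fz w k) := by
  have hA := pDet_A z hz d m (fun i hi => by rw [hd, if_pos hi])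
  intro k
  induction k using Nat.twoStepInduction with
  | zero =>
    rw [Nat.add_zero, Fz_zero]
    have h := hA m le_rfl
    linear_combination Fz w 1 * h
  | one =>
    rcases Nat.eq_zero_or_pos m with hm | hm
    · subst hm
      have hd0 : d 0 = w + 1/w := by rw [hd, if_neg (by omega)]
      have h2 : Fz w 2 = (w + 1/w) * Fz w 1 - Fz w 0 := Fz_rec w hw 0
      rw [Fz_zero] at h2
      simp only [Nat.zero_add, pDet, hd0, pow_zero, Fz_zero]
      linear_combination (-(Fz z 1)) * h2
    · obtain ⟨m', rfl⟩ : ∃ m', m = m' + 1 := ⟨m - 1, by omega⟩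
      have hdm : d (m' + 1) = w + 1/w := by rw [hd, if_neg (by omega)]
      have h1 := hA (m' + 1) le_rfl
      have h0 := hA m' (by omega)
      have h2 : Fz w 2 = (w + 1/w) * Fz w 1 - Fz w 0 := Fz_rec w hw 0
      rw [Fz_zero] at h2
      rw [show m' + 1 + 1 = m' + 2 from rfl, pDet, hdm]
      linear_combination ((w + 1/w) * Fz w 1) * h1 - Fz w 1 * h0 -
        ((-1:ℂ)) ^ (m' + 1) * Fz z (m' + 2) * h2
  | more k ih ih1 =>
    have hdk : d (m + k + 1) = w + 1/w := by rw [hd, if_neg (by omega)]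
    have hr1 : Fz w (k + 3) = (w + 1/w) * Fz w (k + 2) - Fz w (k + 1) := Fz_rec w hw (k + 1)
    have hr2 : Fz w (k + 2) = (w + 1/w) * Fz w (k + 1) - Fz w k := Fz_rec w hw k
    rw [show m + (k + 2) = (m + k) + 2 from by ring, pDet, hdk]
    rw [show m + k + 1 = m + (k + 1) from by ring]
    linear_combination (w + 1/w) * ih1 - ih - ((-1:ℂ)) ^ m * Fz z (m + 1) * hr1 -
      ((-1:ℂ)) ^ m * Fz z m * hr2

end Aux

theorem pencil_eigenvalue_iff_beta (c : ℝ) (m n : ℕ) (lam z w : ℂ)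
    (hz : z ≠ 0) (hw : w ≠ 0)
    (h1 : lam ≠ 2 + c) (h2 : lam ≠ 2 - c) (h3 : lam ≠ -2 + c) (h4 : lam ≠ -2 - c)
    (hzl : lam - c = z + 1 / z) (hwl : lam + c = w + 1 / w) :
    ¬ IsUnit (Hmat (m + n) (c : ℂ) - lam • Dmat m n) ↔ betaF m n z w = 0 := by
  set d : ℕ → ℂ := fun i => if i < m then -(z + 1/z) else (w + 1/w) with hd
  have hM : Hmat (m + n) (c : ℂ) - lam • Dmat m n = Tmat d (m + n) := by
    funext i j
    simp only [Matrix.sub_apply, Matrix.smul_apply, Hmat, Dmat, Tmat,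
      Matrix.diagonal_apply, smul_eq_mul, hd]
    by_cases hij : (i : ℕ) = (j : ℕ)
    · have hij' : i = j := Fin.ext hij
      rw [if_pos hij, if_pos hij', if_pos hij]
      by_cases him : (i : ℕ) < m
      · rw [if_pos him, if_pos him]; linear_combination -hzl
      · rw [if_neg him, if_neg him]; linear_combination hwl
    · have hij' : i ≠ j := fun h => hij (by rw [h])
      rw [if_neg hij, if_neg hij', if_neg hij]
      ring
  -- nonvanishing of Fz z 1 and Fz w 1
  have hFz1 : Fz z 1 ≠ 0 := by
    intro h0
    have e : (z - 1) * (z + 1) = z * Fz z 1 := by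
      simp only [Fz, pow_one, _root_.zpow_neg, Nat.cast_one, zpow_one]
      field_simp
      ring
    rw [h0, mul_zero] at e
    rcases mul_eq_zero.mp e with h | h
    · apply h1
      have hz1 : z = 1 := by linear_combination h
      rw [hz1] at hzl
      norm_num at hzl
      linear_combination hzl
    · apply h3
      have hz1 : z = -1 := by linear_combination h
      rw [hz1] at hzl
      norm_num at hzl
      linear_combination hzl
  have hFw1 : Fz w 1 ≠ 0 := by
    intro h0
    have e : (w - 1) * (w + 1) = w * Fz w 1 := by
      simp only [Fz, pow_one, _root_.zpow_neg, Nat.cast_one, zpow_one]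
      field_simp
      ring
    rw [h0, mul_zero] at e
    rcases mul_eq_zero.mp e with h | h
    · apply h2
      have hw1 : w = 1 := by linear_combination h
      rw [hw1] at hwl
      norm_num at hwl
      linear_combination hwl
    · apply h4
      have hw1 : w = -1 := by linear_combination h
      rw [hw1] at hwl
      norm_num at hwl
      linear_combination hwl
  have hbeta : betaF m n z w = Fz z (m + 1) * Fz w (n + 1) + Fz z m * Fz w n := by
    simp only [betaF, Fz]
    norm_cast
  have hkey : (Hmat (m + n) (c : ℂ) - lam • Dmat m n).det * Fz z 1 * Fz w 1 =
      (-1) ^ m * betaF m n z w := by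
    rw [hM, det_Tmat, hbeta]
    exact pDet_B z w hz hw m d (fun i => rfl) n
  rw [Matrix.isUnit_iff_isUnit_det, isUnit_iff_ne_zero, not_ne_iff]
  constructor
  · intro hdet
    rw [hdet, zero_mul, zero_mul] at hkey
    have hpow : ((-1 : ℂ)) ^ m ≠ 0 := pow_ne_zero _ (by norm_num)
    exact (mul_eq_zero.mp hkey.symm).resolve_left hpow
  · intro hb
    rw [hb, mul_zero] at hkey
    rcases mul_eq_zero.mp hkey with h | h
    · exact (mul_eq_zero.mp h).resolve_right hFz1
    · exact absurd h hFw1
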